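/- Let ε : B → A be a local ring homomorphism (reflecting invertibility of square matrices) and let α be an invertible n×n matrix over B, n ≥ 2, with ε(α) = 1. Write α in block form ⎝α₁₁ α₁₂; α₂₁ α₂₂⎠ with α₁₁ of size 1×1. Then α₁₁ is a unit and α admits the unique LDU decomposition α = ⎝1 0; l 1⎠·diag(d₁, d₂)·⎝1 u; 0 1⎠ with l = α₂₁α₁₁⁻¹, d₁ = α₁₁, d₂ = α₂₂ − α₂₁α₁₁⁻¹α₁₂, u = α₁₁⁻¹α₁₂; moreover ε(d₁) = 1, ε(d₂) = 1, ε(l) = 0, ε(u) = 0, and d₂ is invertible. -/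
import Mathlib


set_option maxHeartbeats 1000000

open Matrix

/-- A ring homomorphism is *local* if it reflects invertibility of square matrices
of every size. -/
def MatLocal {B A : Type*} [Ring B] [Ring A] (f : B →+* A) : Prop :=
  ∀ (n : ℕ) (α : Matrix (Fin n) (Fin n) B), IsUnit (α.map f) → IsUnit α

section Aux

variable {R : Type*} [Ring R] {p q : Type*} [Fintype p] [Fintype q]
  [DecidableEq p] [DecidableEq q]

lemma aux_isUnit_lower (l : Matrix q p R) :
    IsUnit (fromBlocks (1 : Matrix p p R) 0 l (1 : Matrix q q R)) := by
  refine ⟨⟨fromBlocks (1 : Matrix p p R) 0 l (1 : Matrix q q R),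
    fromBlocks (1 : Matrix p p R) 0 (-l) (1 : Matrix q q R), ?_, ?_⟩, rfl⟩ <;>
    simp [fromBlocks_multiply, ← fromBlocks_one]

lemma aux_isUnit_upper (u : Matrix p q R) :
    IsUnit (fromBlocks (1 : Matrix p p R) u 0 (1 : Matrix q q R)) := by
  refine ⟨⟨fromBlocks (1 : Matrix p p R) u 0 (1 : Matrix q q R),
    fromBlocks (1 : Matrix p p R) (-u) 0 (1 : Matrix q q R), ?_, ?_⟩, rfl⟩ <;>
    simp [fromBlocks_multiply, ← fromBlocks_one]

lemma aux_isUnit_diag₂₂ {d₁ : Matrix p p R} {d₂ : Matrix q q R}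
    (h : IsUnit (fromBlocks d₁ 0 0 d₂)) : IsUnit d₂ := by
  obtain ⟨v, hv⟩ := h
  set E : Matrix (p ⊕ q) (p ⊕ q) R := v.inv with hE
  have h1 : fromBlocks d₁ 0 0 d₂ * E = 1 := by
    rw [← hv]; exact v.val_inv
  have h2 : E * fromBlocks d₁ 0 0 d₂ = 1 := by
    rw [← hv]; exact v.inv_val
  rw [← fromBlocks_toBlocks E, fromBlocks_multiply, ← fromBlocks_one,
    fromBlocks_inj] at h1 h2
  refine ⟨⟨d₂, E.toBlocks₂₂, ?_, ?_⟩, rfl⟩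
  · simpa using h1.2.2.2
  · simpa using h2.2.2.2

end Aux

/-- Existence and uniqueness of the LDU decomposition of an invertible matrix `α`
(in block form with blocks of sizes `1` and `m`, `n = 1 + m ≥ 2`) with `ε(α) = 1`,
over a local homomorphism `ε : B → A`:
`α = (1 0; l 1)·diag(d₁,d₂)·(1 u; 0 1)` with `l = α₂₁α₁₁⁻¹`, `d₁ = α₁₁`,
`d₂ = α₂₂ − α₂₁α₁₁⁻¹α₁₂`, `u = α₁₁⁻¹α₁₂`, `ε(d₁) = 1`, `ε(d₂) = 1`,
`ε(l) = 0`, `ε(u) = 0`, and `d₁`, `d₂` invertible. -/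
theorem stmt16 {B A : Type*} [Ring B] [Ring A] (ε : B →+* A) (hloc : MatLocal ε)
    (m : ℕ) (hm : 0 < m)
    (A₁₁ : Matrix (Fin 1) (Fin 1) B) (A₁₂ : Matrix (Fin 1) (Fin m) B)
    (A₂₁ : Matrix (Fin m) (Fin 1) B) (A₂₂ : Matrix (Fin m) (Fin m) B)
    (hα : IsUnit (fromBlocks A₁₁ A₁₂ A₂₁ A₂₂))
    (hε : (fromBlocks A₁₁ A₁₂ A₂₁ A₂₂).map ε = 1) :
    IsUnit A₁₁ ∧
      A₁₁.map ε = 1 ∧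
      (A₂₂ - A₂₁ * Ring.inverse A₁₁ * A₁₂).map ε = 1 ∧
      (A₂₁ * Ring.inverse A₁₁).map ε = 0 ∧
      (Ring.inverse A₁₁ * A₁₂).map ε = 0 ∧
      IsUnit (A₂₂ - A₂₁ * Ring.inverse A₁₁ * A₁₂) ∧
      fromBlocks A₁₁ A₁₂ A₂₁ A₂₂ =
        fromBlocks 1 0 (A₂₁ * Ring.inverse A₁₁) 1 *
          fromBlocks A₁₁ 0 0 (A₂₂ - A₂₁ * Ring.inverse A₁₁ * A₁₂) *
          fromBlocks 1 (Ring.inverse A₁₁ * A₁₂) 0 1 ∧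
      ∀ (l : Matrix (Fin m) (Fin 1) B) (u : Matrix (Fin 1) (Fin m) B)
        (d₁ : Matrix (Fin 1) (Fin 1) B) (d₂ : Matrix (Fin m) (Fin m) B),
        IsUnit d₁ → IsUnit d₂ →
        fromBlocks A₁₁ A₁₂ A₂₁ A₂₂ =
          fromBlocks 1 0 l 1 * fromBlocks d₁ 0 0 d₂ * fromBlocks 1 u 0 1 →
        l = A₂₁ * Ring.inverse A₁₁ ∧ d₁ = A₁₁ ∧
          d₂ = A₂₂ - A₂₁ * Ring.inverse A₁₁ * A₁₂ ∧ u = Ring.inverse A₁₁ * A₁₂ := by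
  rw [fromBlocks_map, ← fromBlocks_one, fromBlocks_inj] at hε
  obtain ⟨h11, h12, h21, h22⟩ := hε
  have hA11 : IsUnit A₁₁ := hloc 1 A₁₁ (by rw [h11]; exact isUnit_one)
  have h21' : (A₂₁ * Ring.inverse A₁₁).map ε = 0 := by
    rw [Matrix.map_mul, h21, Matrix.zero_mul]
  have h12' : (Ring.inverse A₁₁ * A₁₂).map ε = 0 := by
    rw [Matrix.map_mul, h12, Matrix.mul_zero]
  have hmapS : (A₂₂ - A₂₁ * Ring.inverse A₁₁ * A₁₂).map ε = 1 := by
    rw [Matrix.map_sub _ (fun a b => map_sub ε a b), h22, Matrix.map_mul, h21',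
      Matrix.zero_mul, sub_zero]
  -- the LDU decomposition
  have hldu : fromBlocks A₁₁ A₁₂ A₂₁ A₂₂ =
      fromBlocks 1 0 (A₂₁ * Ring.inverse A₁₁) 1 *
        fromBlocks A₁₁ 0 0 (A₂₂ - A₂₁ * Ring.inverse A₁₁ * A₁₂) *
        fromBlocks 1 (Ring.inverse A₁₁ * A₁₂) 0 1 := by
    rw [fromBlocks_multiply, fromBlocks_multiply, fromBlocks_inj]
    have c1 : A₂₁ * Ring.inverse A₁₁ * A₁₁ = A₂₁ := by
      rw [Matrix.mul_assoc, Ring.inverse_mul_cancel _ hA11, Matrix.mul_one]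
    have c2 : A₁₁ * (Ring.inverse A₁₁ * A₁₂) = A₁₂ := by
      rw [← Matrix.mul_assoc, Ring.mul_inverse_cancel _ hA11, Matrix.one_mul]
    refine ⟨by simp, by simp [c2], by simp [c1], ?_⟩
    simp only [Matrix.mul_zero, Matrix.zero_mul, Matrix.mul_one, Matrix.one_mul,
      add_zero, zero_add, c1]
    rw [← Matrix.mul_assoc A₂₁ (Ring.inverse A₁₁) A₁₂]
    abel
  -- invertibility of the Schur complement
  have hSchur : IsUnit (A₂₂ - A₂₁ * Ring.inverse A₁₁ * A₁₂) := by
    obtain ⟨uL, hL⟩ := aux_isUnit_lower (R := B) (A₂₁ * Ring.inverse A₁₁)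
    obtain ⟨uU, hU⟩ := aux_isUnit_upper (R := B) (Ring.inverse A₁₁ * A₁₂)
    have h := hα
    rw [hldu, ← hL, ← hU, Units.isUnit_mul_units, Units.isUnit_units_mul] at h
    exact aux_isUnit_diag₂₂ h
  refine ⟨hA11, h11, hmapS, h21', h12', hSchur, hldu, ?_⟩
  intro l u d₁ d₂ hd₁ hd₂ heq
  rw [fromBlocks_multiply, fromBlocks_multiply] at heq
  simp only [Matrix.one_mul, Matrix.mul_one, Matrix.mul_zero, Matrix.zero_mul,
    add_zero, zero_add] at heq
  rw [fromBlocks_inj] at heq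
  obtain ⟨e11, e12, e21, e22⟩ := heq
  have hd₁A : d₁ = A₁₁ := e11.symm
  subst hd₁A
  have hl : l = A₂₁ * Ring.inverse d₁ := by
    rw [e21, Matrix.mul_assoc, Ring.mul_inverse_cancel _ hd₁, Matrix.mul_one]
  have hu : u = Ring.inverse d₁ * A₁₂ := by
    rw [e12, ← Matrix.mul_assoc, Ring.inverse_mul_cancel _ hd₁, Matrix.one_mul]
  refine ⟨hl, rfl, ?_, hu⟩
  rw [e22, hu, e21, ← Matrix.mul_assoc (l * d₁) (Ring.inverse d₁) A₁₂,
    Matrix.mul_assoc l d₁ (Ring.inverse d₁), Ring.mul_inverse_cancel _ hd₁,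
    Matrix.mul_one]
  abel
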